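/- Let X be a real normed space, Y a real Banach space, and r, s, t positive integers. A map f : X → Y with f(0) = 0 is additive if and only if ‖r·f((s·x + t·y)/r) − s·f(x) − t·f(y)‖ → 0 as ‖x‖ + ‖y‖ → ∞ (i.e., for every ε > 0 there exists d > 0 such that the norm of the Jensen difference is at most ε whenever ‖x‖ + ‖y‖ ≥ d). -/

import Mathlib

set_option maxHeartbeats 1000000


theorem stmt_5 {X Y : Type*} [NormedAddCommGroup X] [NormedSpace ℝ X]
    [NormedAddCommGroup Y] [NormedSpace ℝ Y] [CompleteSpace Y]
    (r s t : ℕ) (hr : 0 < r) (hs : 0 < s) (ht : 0 < t)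
    (f : X → Y) (hf0 : f 0 = 0) :
    (∀ x y : X, f (x + y) = f x + f y) ↔
      (∀ ε : ℝ, 0 < ε → ∃ d : ℝ, 0 < d ∧ ∀ x y : X, d ≤ ‖x‖ + ‖y‖ →
        ‖(r : ℝ) • f (((r : ℝ)⁻¹) • ((s : ℝ) • x + (t : ℝ) • y)) - (s : ℝ) • f x - (t : ℝ) • f y‖
          ≤ ε) := by
  have hr' : (0:ℝ) < r := by exact_mod_cast hr
  have hs' : (0:ℝ) < s := by exact_mod_cast hs
  have ht' : (0:ℝ) < t := by exact_mod_cast ht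
  have hr1 : (1:ℝ) ≤ r := by exact_mod_cast hr
  constructor
  · intro hadd ε hε
    refine ⟨1, one_pos, ?_⟩
    intro x y _
    have key : ∀ (n : ℕ) (v : X), f ((n : ℝ) • v) = (n : ℝ) • f v := by
      intro n v
      rw [Nat.cast_smul_eq_nsmul, Nat.cast_smul_eq_nsmul]
      exact (AddMonoidHom.mk' f hadd).map_nsmul n v
    have e1 : (r : ℝ) • f ((r : ℝ)⁻¹ • ((s : ℝ) • x + (t : ℝ) • y))
        = f ((s : ℝ) • x + (t : ℝ) • y) := by
      rw [← key r]
      congr 1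
      exact smul_inv_smul₀ hr'.ne' _
    have e2 : f ((s : ℝ) • x + (t : ℝ) • y) = (s : ℝ) • f x + (t : ℝ) • f y := by
      rw [hadd, key, key]
    rw [e1, e2]
    simp only [add_sub_cancel_left, sub_self, norm_zero]
    linarith
  · intro h
    -- Step 1: Cauchy difference is small for large arguments
    have step1 : ∀ ε : ℝ, 0 < ε → ∃ D : ℝ, 0 < D ∧ ∀ a b : X, D ≤ ‖a‖ → D ≤ ‖b‖ →
        ‖f (a + b) - f a - f b‖ ≤ ε := by
      intro ε hε
      obtain ⟨d, hd, hE⟩ := h (r * ε / 3) (by positivity)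
      refine ⟨(s + t) * d, by positivity, ?_⟩
      intro a b ha hb
      set x := ((r : ℝ) / s) • a with hxdef
      set y := ((r : ℝ) / t) • b with hydef
      have hsx : (s : ℝ) • x = (r : ℝ) • a := by
        rw [hxdef, smul_smul]; congr 1; field_simp
      have hty : (t : ℝ) • y = (r : ℝ) • b := by
        rw [hydef, smul_smul]; congr 1; field_simp
      have hnx : ‖x‖ = ((r : ℝ) / s) * ‖a‖ := by
        rw [hxdef, norm_smul, Real.norm_eq_abs, abs_of_pos (by positivity)]
      have hny : ‖y‖ = ((r : ℝ) / t) * ‖b‖ := by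
        rw [hydef, norm_smul, Real.norm_eq_abs, abs_of_pos (by positivity)]
      have hdx : d ≤ ‖x‖ := by
        rw [hnx]
        have h1 : (s : ℝ) * d ≤ ‖a‖ := by nlinarith
        have h2 : ((r : ℝ) / s) * ((s : ℝ) * d) ≤ ((r : ℝ) / s) * ‖a‖ := by
          apply mul_le_mul_of_nonneg_left h1 (by positivity)
        have h3 : ((r : ℝ) / s) * ((s : ℝ) * d) = (r : ℝ) * d := by field_simp
        nlinarith
      have hdy : d ≤ ‖y‖ := by
        rw [hny]
        have h1 : (t : ℝ) * d ≤ ‖b‖ := by nlinarith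
        have h2 : ((r : ℝ) / t) * ((t : ℝ) * d) ≤ ((r : ℝ) / t) * ‖b‖ := by
          apply mul_le_mul_of_nonneg_left h1 (by positivity)
        have h3 : ((r : ℝ) / t) * ((t : ℝ) * d) = (r : ℝ) * d := by field_simp
        nlinarith
      have h1 := hE x y (by nlinarith [norm_nonneg x, norm_nonneg y])
      have h2 := hE x 0 (by rw [norm_zero]; linarith)
      have h3 := hE 0 y (by rw [norm_zero]; linarith)
      have harg1 : (r : ℝ)⁻¹ • ((s : ℝ) • x + (t : ℝ) • y) = a + b := by
        rw [hsx, hty, ← smul_add, inv_smul_smul₀ hr'.ne']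
      have harg2 : (r : ℝ)⁻¹ • ((s : ℝ) • x + (t : ℝ) • (0 : X)) = a := by
        rw [smul_zero, add_zero, hsx, inv_smul_smul₀ hr'.ne']
      have harg3 : (r : ℝ)⁻¹ • ((s : ℝ) • (0 : X) + (t : ℝ) • y) = b := by
        rw [smul_zero, zero_add, hty, inv_smul_smul₀ hr'.ne']
      rw [harg1] at h1
      rw [harg2, hf0, smul_zero, sub_zero] at h2
      rw [harg3, hf0, smul_zero, sub_zero] at h3
      have key : (r : ℝ) • (f (a + b) - f a - f b)
          = ((r : ℝ) • f (a + b) - (s : ℝ) • f x - (t : ℝ) • f y)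
            - ((r : ℝ) • f a - (s : ℝ) • f x)
            - ((r : ℝ) • f b - (t : ℝ) • f y) := by
        module
      have hnorm : ‖(r : ℝ) • (f (a + b) - f a - f b)‖ ≤ r * ε := by
        rw [key]
        have t1 := norm_sub_le (((r : ℝ) • f (a + b) - (s : ℝ) • f x - (t : ℝ) • f y)
            - ((r : ℝ) • f a - (s : ℝ) • f x)) ((r : ℝ) • f b - (t : ℝ) • f y)
        have t2 := norm_sub_le ((r : ℝ) • f (a + b) - (s : ℝ) • f x - (t : ℝ) • f y)
            ((r : ℝ) • f a - (s : ℝ) • f x)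
        linarith
      rw [norm_smul, Real.norm_eq_abs, abs_of_pos hr'] at hnorm
      calc ‖f (a + b) - f a - f b‖
          = ((r:ℝ) * ‖f (a + b) - f a - f b‖) / r := by field_simp
        _ ≤ ((r:ℝ) * ε) / r := by gcongr
        _ = ε := by field_simp
    -- Step 2: conclude exact additivity
    intro x y
    by_cases hex : ∃ z : X, z ≠ 0
    · obtain ⟨z0, hz0⟩ := hex
      have hz0' : (0:ℝ) < ‖z0‖ := norm_pos_iff.mpr hz0
      have main : ∀ δ : ℝ, 0 < δ → ‖f (x + y) - f x - f y‖ ≤ 4 * δ := by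
        intro δ hδ
        obtain ⟨D, hDpos, hC⟩ := step1 δ hδ
        set R : ℝ := D + ‖x‖ + ‖y‖ with hRdef
        have hRpos : 0 < R := by have := norm_nonneg x; have := norm_nonneg y; linarith
        set z : X := (R / ‖z0‖) • z0 with hzdef
        have hnz : ‖z‖ = R := by
          rw [hzdef, norm_smul, Real.norm_eq_abs, abs_of_pos (by positivity),
            div_mul_cancel₀ _ hz0'.ne']
        have c4 : D ≤ ‖z‖ := by rw [hnz]; have := norm_nonneg x; have := norm_nonneg y; linarith
        have c3 : D ≤ ‖-z‖ := by rw [norm_neg]; exact c4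
        have c1 : D ≤ ‖x + z‖ := by
          have hle : ‖z‖ ≤ ‖x + z‖ + ‖x‖ := by
            calc ‖z‖ = ‖(x + z) + (-x)‖ := by congr 1; abel
              _ ≤ ‖x + z‖ + ‖-x‖ := norm_add_le _ _
              _ = ‖x + z‖ + ‖x‖ := by rw [norm_neg]
          rw [hnz] at hle; linarith [norm_nonneg x, norm_nonneg y]
        have c2 : D ≤ ‖y - z‖ := by
          have hle : ‖z‖ ≤ ‖y - z‖ + ‖y‖ := by
            calc ‖z‖ = ‖-(y - z) + y‖ := by congr 1; abel
              _ ≤ ‖-(y - z)‖ + ‖y‖ := norm_add_le _ _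
              _ = ‖y - z‖ + ‖y‖ := by rw [norm_neg]
          rw [hnz] at hle; linarith [norm_nonneg x, norm_nonneg y]
        have h1 := hC (x + z) (y - z) c1 c2
        have h2 := hC (x + z) (-z) c1 c3
        have h3 := hC (y - z) z c2 c4
        have h4 := hC z (-z) c4 c3
        have e1 : x + z + (y - z) = x + y := by abel
        have e2 : x + z + -z = x := by abel
        have e3 : y - z + z = y := by abel
        have e4 : z + -z = (0 : X) := by abel
        rw [e1] at h1
        rw [e2] at h2
        rw [e3] at h3
        rw [e4, hf0] at h4
        have key : f (x + y) - f x - f y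
            = (f (x + y) - f (x + z) - f (y - z))
              - (f x - f (x + z) - f (-z))
              - (f y - f (y - z) - f z)
              + ((0 : Y) - f z - f (-z)) := by abel
        rw [key]
        have t1 := norm_add_le ((f (x + y) - f (x + z) - f (y - z))
            - (f x - f (x + z) - f (-z)) - (f y - f (y - z) - f z)) ((0 : Y) - f z - f (-z))
        have t2 := norm_sub_le ((f (x + y) - f (x + z) - f (y - z))
            - (f x - f (x + z) - f (-z))) (f y - f (y - z) - f z)
        have t3 := norm_sub_le (f (x + y) - f (x + z) - f (y - z)) (f x - f (x + z) - f (-z))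
        linarith
      by_contra hne
      have hpos : 0 < ‖f (x + y) - f x - f y‖ := by
        rw [norm_pos_iff, sub_ne_zero]
        intro hcontra
        apply hne
        have : f (x + y) - f x = f y := hcontra
        linear_combination (norm := abel) this
      have := main (‖f (x + y) - f x - f y‖ / 8) (by positivity)
      linarith
    · push_neg at hex
      rw [hex x, hex y, zero_add, hf0, zero_add]
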